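/- arXiv:1808.04026 — 3 statements merged into one kernel-verified Lean document; each statement's English description precedes it below -/
import Mathlib

section
/- Let $a, b \in \mathbb{R}^d$ with $d \ge 1$ and $\beta \in [0,1]$. If $\langle b \rangle \ge \beta \langle a - b \rangle$, then $\langle a \rangle^{1/2} \le \langle b \rangle^{1/2} + (1 - \sqrt{\beta}/2)\, \langle a - b \rangle^{1/2}$. -/
theorem stmt_2 (d : ℕ) (hd : 1 ≤ d) (a b : EuclideanSpace ℝ (Fin d)) (β : ℝ)
    (hβ : β ∈ Set.Icc (0:ℝ) 1)
    (h : Real.sqrt (1 + ‖b‖ ^ 2) ≥ β * Real.sqrt (1 + ‖a - b‖ ^ 2)) :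
    Real.sqrt (Real.sqrt (1 + ‖a‖ ^ 2)) ≤
      Real.sqrt (Real.sqrt (1 + ‖b‖ ^ 2)) +
        (1 - Real.sqrt β / 2) * Real.sqrt (Real.sqrt (1 + ‖a - b‖ ^ 2)) := by
  obtain ⟨hβ0, hβ1⟩ := hβ
  set sA := Real.sqrt (1 + ‖a‖ ^ 2) with hsAdef
  set s1 := Real.sqrt (1 + ‖b‖ ^ 2) with hs1def
  set s2 := Real.sqrt (1 + ‖a - b‖ ^ 2) with hs2def
  have hsA2 : sA ^ 2 = 1 + ‖a‖ ^ 2 := Real.sq_sqrt (by positivity)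
  have hs12 : s1 ^ 2 = 1 + ‖b‖ ^ 2 := Real.sq_sqrt (by positivity)
  have hs22 : s2 ^ 2 = 1 + ‖a - b‖ ^ 2 := Real.sq_sqrt (by positivity)
  have hsAnn : 0 ≤ sA := Real.sqrt_nonneg _
  have hs1nn : 0 ≤ s1 := Real.sqrt_nonneg _
  have hs2nn : 0 ≤ s2 := Real.sqrt_nonneg _
  -- norms bounded by brackets
  have h1b : ‖b‖ ≤ s1 := by nlinarith [norm_nonneg b]
  have h2b : ‖a - b‖ ≤ s2 := by nlinarith [norm_nonneg (a - b)]
  have hA : ‖a‖ ≤ ‖b‖ + ‖a - b‖ := by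
    have := norm_add_le b (a - b)
    simpa using this
  -- subadditivity: sA ≤ s1 + s2
  have hsub : sA ≤ s1 + s2 := by
    have hle : 1 + ‖a‖ ^ 2 ≤ (s1 + s2) ^ 2 := by
      nlinarith [mul_le_mul h1b h2b (norm_nonneg (a - b)) hs1nn,
        mul_nonneg (norm_nonneg b) (norm_nonneg (a - b)), norm_nonneg a]
    calc sA ≤ Real.sqrt ((s1 + s2) ^ 2) := Real.sqrt_le_sqrt hle
      _ = s1 + s2 := Real.sqrt_sq (by positivity)
  -- square roots of brackets
  set u := Real.sqrt sA with hudef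
  set v := Real.sqrt s1 with hvdef
  set w := Real.sqrt s2 with hwdef
  set t := Real.sqrt β with htdef
  have hu2 : u ^ 2 = sA := Real.sq_sqrt hsAnn
  have hv2 : v ^ 2 = s1 := Real.sq_sqrt hs1nn
  have hw2 : w ^ 2 = s2 := Real.sq_sqrt hs2nn
  have ht2 : t ^ 2 = β := Real.sq_sqrt hβ0
  have htnn : 0 ≤ t := Real.sqrt_nonneg _
  have ht1 : t ≤ 1 := by
    rw [htdef]
    exact Real.sqrt_le_one.mpr hβ1
  have hunn : 0 ≤ u := Real.sqrt_nonneg _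
  have hvnn : 0 ≤ v := Real.sqrt_nonneg _
  have hwnn : 0 ≤ w := Real.sqrt_nonneg _
  have htw : t * w ≤ v := by
    have : Real.sqrt (β * s2) ≤ Real.sqrt s1 := Real.sqrt_le_sqrt h
    rwa [Real.sqrt_mul hβ0] at this
  have hc : 0 ≤ 1 - t / 2 := by linarith
  have hrhsnn : 0 ≤ v + (1 - t / 2) * w := add_nonneg hvnn (mul_nonneg hc hwnn)
  have hsq : u ^ 2 ≤ (v + (1 - t / 2) * w) ^ 2 := by
    nlinarith [mul_le_mul_of_nonneg_right htw hwnn,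
      mul_nonneg (mul_nonneg htnn (sub_nonneg.mpr ht1)) (sq_nonneg w),
      sq_nonneg w]
  calc u = Real.sqrt (u ^ 2) := (Real.sqrt_sq hunn).symm
    _ ≤ Real.sqrt ((v + (1 - t / 2) * w) ^ 2) := Real.sqrt_le_sqrt hsq
    _ = v + (1 - t / 2) * w := Real.sqrt_sq hrhsnn
end

section
/- Fix $s \in (0,1)$, $\rho > 0$, and $g$ as follows: $g(r) = \int_0^r g'(x)dx$ with $g'(r) = s r^{s-1} - s \rho^{s-1}$ for $r \in (0,\rho]$, $g'(r)=0$ for $r \ge \rho$. Let $f_\lambda(r) = e^{\lambda g(r)}$ for $\lambda \in [0,1]$. Then for $y \ge 1$ and $x \in [0,y]$: $|f_\lambda(y+x) - f_\lambda(y)| \le f_\lambda(x) f_\lambda(y)\, \lambda\, g(y)\, (x/y)$. -/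
open MeasureTheory

theorem stmt_7 (s ρ lam : ℝ) (hs : s ∈ Set.Ioo (0:ℝ) 1) (hρ : 0 < ρ)
    (hlam : lam ∈ Set.Icc (0:ℝ) 1) (g : ℝ → ℝ)
    (hg : ∀ r : ℝ, g r = ∫ x in (0:ℝ)..r,
      (if x ≤ ρ then s * x ^ (s - 1) - s * ρ ^ (s - 1) else 0)) :
    ∀ x y : ℝ, 1 ≤ y → x ∈ Set.Icc 0 y →
      |Real.exp (lam * g (y + x)) - Real.exp (lam * g y)| ≤
        Real.exp (lam * g x) * Real.exp (lam * g y) * lam * g y * (x / y) := by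
  obtain ⟨hs0, hs1⟩ := hs
  obtain ⟨hl0, hl1⟩ := hlam
  set φ : ℝ → ℝ := fun t => if t ≤ ρ then s * t ^ (s - 1) - s * ρ ^ (s - 1) else 0 with hφ
  have hgφ : ∀ r : ℝ, g r = ∫ t in (0:ℝ)..r, φ t := hg
  have hanti : ∀ a b : ℝ, 0 < a → a ≤ b → φ b ≤ φ a := by
    intro a b ha hab
    simp only [hφ]
    by_cases hb : b ≤ ρ
    · rw [if_pos (hab.trans hb), if_pos hb]
      have := Real.rpow_le_rpow_of_nonpos ha hab (by linarith : s - 1 ≤ 0)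
      nlinarith
    · rw [if_neg hb]
      by_cases ha' : a ≤ ρ
      · rw [if_pos ha']
        have := Real.rpow_le_rpow_of_nonpos ha ha' (by linarith : s - 1 ≤ 0)
        nlinarith
      · rw [if_neg ha']
  have hpos : ∀ t : ℝ, 0 < t → 0 ≤ φ t := by
    intro t ht
    simp only [hφ]
    by_cases h : t ≤ ρ
    · rw [if_pos h]
      have := Real.rpow_le_rpow_of_nonpos ht h (by linarith : s - 1 ≤ 0)
      nlinarith
    · rw [if_neg h]
  have hmeas : Measurable φ := by
    apply Measurable.ite (measurableSet_le measurable_id measurable_const)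
    · exact ((measurable_id.pow_const _).const_mul s).sub measurable_const
    · exact measurable_const
  have hφle : ∀ t : ℝ, 0 < t → φ t ≤ s * t ^ (s - 1) := by
    intro t ht
    simp only [hφ]
    by_cases h : t ≤ ρ
    · rw [if_pos h]
      nlinarith [Real.rpow_nonneg hρ.le (s - 1)]
    · rw [if_neg h]
      positivity
  have hint : ∀ a b : ℝ, 0 ≤ a → 0 ≤ b → IntervalIntegrable φ volume a b := by
    intro a b ha hb
    have hbnd : IntervalIntegrable (fun x : ℝ => s * x ^ (s - 1) + s * ρ ^ (s - 1)) volume a b :=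
      ((intervalIntegral.intervalIntegrable_rpow' (by linarith)).const_mul s).add
        intervalIntegrable_const
    apply hbnd.mono_fun (hmeas.aestronglyMeasurable.restrict)
    rw [Filter.EventuallyLE, ae_restrict_iff' measurableSet_uIoc]
    filter_upwards with t ht
    have ht0 : 0 < t := lt_of_le_of_lt (le_min ha hb) ht.1
    have h1 : 0 ≤ φ t := hpos t ht0
    have h2 : φ t ≤ s * t ^ (s - 1) := hφle t ht0
    simp only [Real.norm_eq_abs, abs_of_nonneg h1]
    have : 0 ≤ s * t ^ (s-1) + s * ρ ^ (s-1) := by positivity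
    rw [abs_of_nonneg this]
    nlinarith [Real.rpow_nonneg hρ.le (s - 1)]
  have hne0 : ∀ᵐ t : ℝ ∂volume, t ≠ 0 := by
    refine compl_mem_ae_iff.mpr ?_
    exact measure_singleton (0:ℝ)
  have hgab : ∀ a b : ℝ, 0 ≤ a → 0 ≤ b → g b - g a = ∫ t in a..b, φ t := by
    intro a b ha hb
    rw [hgφ a, hgφ b]
    exact intervalIntegral.integral_interval_sub_left (hint 0 b le_rfl hb) (hint 0 a le_rfl ha)
  intro x y hy hx
  obtain ⟨hx0, hxy⟩ := hx
  have hy0 : (0:ℝ) < y := lt_of_lt_of_le one_pos hy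
  have hyx0 : 0 ≤ y + x := by linarith
  -- g is nonneg and monotone on nonnegatives
  have hgmono : ∀ a b : ℝ, 0 ≤ a → a ≤ b → g a ≤ g b := by
    intro a b ha hab
    have hnn : 0 ≤ ∫ t in a..b, φ t := by
      apply intervalIntegral.integral_nonneg_of_ae_restrict hab
      rw [Filter.EventuallyLE, ae_restrict_iff' measurableSet_Icc]
      filter_upwards [hne0] with t ht htm
      exact hpos t (lt_of_le_of_ne (ha.trans htm.1) (Ne.symm ht))
    have := hgab a b ha (ha.trans hab)
    linarith
  have hg0 : g 0 = 0 := by rw [hgφ 0, intervalIntegral.integral_same]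
  have hgnn : ∀ r : ℝ, 0 ≤ r → 0 ≤ g r := by
    intro r hr
    have := hgmono 0 r le_rfl hr
    linarith
  set d : ℝ := g (y + x) - g y with hd
  have hdint : d = ∫ t in y..(y + x), φ t := hgab y (y + x) hy0.le hyx0
  have hd0 : 0 ≤ d := by
    have := hgmono y (y + x) hy0.le (by linarith)
    simp only [hd]; linarith
  -- d ≤ g x
  have hda : d ≤ g x := by
    rw [hdint, hgφ x]
    have hshift : (∫ t in (0:ℝ)..x, φ (t + y)) = ∫ t in y..(y + x), φ t := by
      rw [intervalIntegral.integral_comp_add_right]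
      norm_num [add_comm]
    rw [← hshift]
    have hi1 : IntervalIntegrable (fun t => φ (t + y)) volume 0 x := by
      have := (hint y (y + x) hy0.le hyx0).comp_add_right y
      simpa using this
    apply intervalIntegral.integral_mono_ae_restrict hx0 hi1 (hint 0 x le_rfl hx0)
    rw [Filter.EventuallyLE, ae_restrict_iff' measurableSet_Icc]
    filter_upwards [hne0] with t ht htm
    have ht0 : 0 < t := lt_of_le_of_ne htm.1 (Ne.symm ht)
    exact hanti t (t + y) ht0 (by linarith)
  -- d ≤ x * φ y
  have hdy : d ≤ x * φ y := by
    rw [hdint]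
    calc (∫ t in y..(y + x), φ t) ≤ ∫ _ in y..(y + x), φ y := by
          apply intervalIntegral.integral_mono_on (by linarith) (hint y (y+x) hy0.le hyx0)
            intervalIntegrable_const
          intro t htm
          exact hanti y t hy0 htm.1
      _ = x * φ y := by simp [mul_comm]
  -- y * φ y ≤ g y
  have hby : y * φ y ≤ g y := by
    have := hgab 0 y le_rfl hy0.le
    rw [hg0, sub_zero] at this
    rw [this]
    calc y * φ y = ∫ _ in (0:ℝ)..y, φ y := by simp [mul_comm]
      _ ≤ ∫ t in (0:ℝ)..y, φ t := by
          apply intervalIntegral.integral_mono_ae_restrict hy0.le intervalIntegrable_const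
            (hint 0 y le_rfl hy0.le)
          rw [Filter.EventuallyLE, ae_restrict_iff' measurableSet_Icc]
          filter_upwards [hne0] with t ht htm
          exact hanti t y (lt_of_le_of_ne htm.1 (Ne.symm ht)) htm.2
  have hφy0 : 0 ≤ φ y := hpos y hy0
  set a := g x with ha
  set b := g y with hb
  have ha0 : 0 ≤ a := hgnn x hx0
  have hb0 : 0 ≤ b := hgnn y hy0.le
  have hgyx : g (y + x) = b + d := by simp [hd]
  -- d ≤ b * (x / y)
  have hdb : d ≤ b * (x / y) := by
    rw [← mul_div_assoc, le_div_iff₀ hy0]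
    nlinarith [mul_le_mul_of_nonneg_right hdy hy0.le, mul_le_mul_of_nonneg_left hby hx0]
  -- key exponential inequality : exp t - 1 ≤ t * exp t for t ≥ 0 (indeed all t)
  have hkey : Real.exp (lam * d) - 1 ≤ (lam * d) * Real.exp (lam * d) := by
    have h := Real.add_one_le_exp (-(lam * d))
    rw [Real.exp_neg] at h
    have hmul := mul_le_mul_of_nonneg_right h (Real.exp_pos (lam * d)).le
    rw [add_mul, inv_mul_cancel₀ (Real.exp_ne_zero _)] at hmul
    nlinarith [hmul]
  have hkey2 : Real.exp (lam * d) ≤ Real.exp (lam * a) := by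
    apply Real.exp_le_exp.mpr
    nlinarith
  rw [hgyx]
  have habs : Real.exp (lam * b) ≤ Real.exp (lam * (b + d)) := by
    apply Real.exp_le_exp.mpr; nlinarith
  rw [abs_of_nonneg (by linarith)]
  have hxy0 : 0 ≤ x / y := by positivity
  calc Real.exp (lam * (b + d)) - Real.exp (lam * b)
      = Real.exp (lam * b) * (Real.exp (lam * d) - 1) := by
        rw [mul_add, Real.exp_add]; ring
    _ ≤ Real.exp (lam * b) * ((lam * d) * Real.exp (lam * d)) := by
        apply mul_le_mul_of_nonneg_left hkey (Real.exp_pos _).le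
    _ ≤ Real.exp (lam * b) * ((lam * (b * (x / y))) * Real.exp (lam * a)) := by
        apply mul_le_mul_of_nonneg_left _ (Real.exp_pos _).le
        apply mul_le_mul _ hkey2 (Real.exp_pos _).le (by positivity)
        nlinarith
    _ = Real.exp (lam * a) * Real.exp (lam * b) * lam * b * (x / y) := by ring
end

section
/- Define $L_\kappa(t,\xi) = 1 + \frac{\kappa\langle\xi\rangle}{\langle\xi\rangle^{1/2} + \kappa t}$ for $\kappa \in (0,1]$, $t \ge 0$, $\xi \in \mathbb{R}$. Then $L_\kappa(t,\xi) \ge 1$, $|\partial_\xi L_\kappa(t,\xi)| \lesssim 1$ uniformly in $\kappa, t, \xi$, and $-\frac{\partial_t L_\kappa(t,\xi)}{L_\kappa(t,\xi)} = \frac{\kappa^2\langle\xi\rangle}{(\langle\xi\rangle^{1/2}+\kappa t)(\langle\xi\rangle^{1/2}+\kappa t+\kappa\langle\xi\rangle)} \le \frac{\kappa\langle\xi\rangle}{\langle\xi\rangle^{3/2} + \kappa t^2}$. -/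
/-- The averaging length `L_κ(t,ξ) = 1 + κ⟨ξ⟩/(⟨ξ⟩^{1/2} + κ t)`, where `⟨ξ⟩ = √(1+ξ²)`. -/
noncomputable def Lkappa (κ t ξ : ℝ) : ℝ :=
  1 + κ * Real.sqrt (1 + ξ ^ 2) / (Real.sqrt (Real.sqrt (1 + ξ ^ 2)) + κ * t)

lemma hasDerivAt_aux_a (ξ : ℝ) :
    HasDerivAt (fun x : ℝ => Real.sqrt (1 + x ^ 2)) (ξ / Real.sqrt (1 + ξ ^ 2)) ξ := by
  have h1 : HasDerivAt (fun x : ℝ => 1 + x ^ 2) (2 * ξ) ξ := by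
    simpa using ((hasDerivAt_pow 2 ξ).const_add 1)
  have h2 := (Real.hasDerivAt_sqrt (by positivity : (1:ℝ) + ξ ^ 2 ≠ 0)).comp ξ h1
  refine h2.congr_deriv ?_
  have ha : Real.sqrt (1 + ξ ^ 2) ≠ 0 := by positivity
  field_simp

lemma hasDerivAt_aux_b (ξ : ℝ) :
    HasDerivAt (fun x : ℝ => Real.sqrt (Real.sqrt (1 + x ^ 2)))
      (ξ / (2 * Real.sqrt (1 + ξ ^ 2) * Real.sqrt (Real.sqrt (1 + ξ ^ 2)))) ξ := by
  have ha : (0:ℝ) < Real.sqrt (1 + ξ ^ 2) := Real.sqrt_pos.2 (by positivity)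
  have h := (Real.hasDerivAt_sqrt ha.ne').comp ξ (hasDerivAt_aux_a ξ)
  refine h.congr_deriv ?_
  rw [div_mul_div_comm, one_mul]
  ring_nf

set_option maxHeartbeats 1000000 in
theorem stmt_17 :
    ∃ C : ℝ, 0 < C ∧
      ∀ (κ t ξ : ℝ), κ ∈ Set.Ioc (0:ℝ) 1 → 0 ≤ t →
        1 ≤ Lkappa κ t ξ ∧
        |deriv (fun x => Lkappa κ t x) ξ| ≤ C ∧
        -(deriv (fun s => Lkappa κ s ξ) t) / Lkappa κ t ξ =
          κ ^ 2 * Real.sqrt (1 + ξ ^ 2) /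
            ((Real.sqrt (Real.sqrt (1 + ξ ^ 2)) + κ * t) *
              (Real.sqrt (Real.sqrt (1 + ξ ^ 2)) + κ * t + κ * Real.sqrt (1 + ξ ^ 2))) ∧
        -(deriv (fun s => Lkappa κ s ξ) t) / Lkappa κ t ξ ≤
          κ * Real.sqrt (1 + ξ ^ 2) / (Real.sqrt (1 + ξ ^ 2) ^ ((3:ℝ)/2) + κ * t ^ 2) := by
  refine ⟨2, by norm_num, ?_⟩
  intro κ t ξ hκ ht
  obtain ⟨hκ0, hκ1⟩ := hκ
  set a : ℝ := Real.sqrt (1 + ξ ^ 2) with ha_def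
  set b : ℝ := Real.sqrt a with hb_def
  have ha1 : (1:ℝ) ≤ a := by
    have := Real.sqrt_le_sqrt (show (1:ℝ) ≤ 1 + ξ ^ 2 by nlinarith)
    simpa [ha_def] using this
  have ha0 : (0:ℝ) < a := lt_of_lt_of_le one_pos ha1
  have hb1 : (1:ℝ) ≤ b := by
    have := Real.sqrt_le_sqrt ha1
    simpa [hb_def] using this
  have hb0 : (0:ℝ) < b := lt_of_lt_of_le one_pos hb1
  have hb2 : b ^ 2 = a := Real.sq_sqrt ha0.le
  have hξa : |ξ| ≤ a := by
    have := Real.sqrt_le_sqrt (show ξ ^ 2 ≤ 1 + ξ ^ 2 by linarith)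
    simpa [ha_def, Real.sqrt_sq_eq_abs] using this
  set d : ℝ := b + κ * t with hd_def
  have hd1 : (1:ℝ) ≤ d := le_add_of_le_of_nonneg hb1 (by positivity)
  have hd0 : (0:ℝ) < d := lt_of_lt_of_le one_pos hd1
  have hbd : b ≤ d := le_add_of_le_of_nonneg le_rfl (by positivity)
  have hLval : Lkappa κ t ξ = 1 + κ * a / d := rfl
  -- Part 1
  have part1 : 1 ≤ Lkappa κ t ξ := by
    rw [hLval]
    have : 0 ≤ κ * a / d := by positivity
    linarith
  refine ⟨part1, ?_, ?_, ?_⟩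
  · -- ξ-derivative bound
    have hA := hasDerivAt_aux_a ξ
    have hB := hasDerivAt_aux_b ξ
    have hg : HasDerivAt (fun x : ℝ => Real.sqrt (Real.sqrt (1 + x ^ 2)) + κ * t)
        (ξ / (2 * a * b)) ξ := hB.add_const (κ * t)
    have hf : HasDerivAt (fun x : ℝ => κ * Real.sqrt (1 + x ^ 2)) (κ * (ξ / a)) ξ :=
      hA.const_mul κ
    have hL : HasDerivAt (fun x : ℝ => Lkappa κ t x)
        ((κ * (ξ / a) * d - κ * a * (ξ / (2 * a * b))) / d ^ 2) ξ := by
      have := (hf.div hg hd0.ne').const_add 1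
      exact this
    rw [hL.deriv, abs_div, abs_of_pos (by positivity : (0:ℝ) < d ^ 2),
      div_le_iff₀ (by positivity : (0:ℝ) < d ^ 2)]
    have h1 : |κ * (ξ / a) * d| ≤ d := by
      rw [abs_mul, abs_mul, abs_div, abs_of_pos hκ0, abs_of_pos ha0, abs_of_pos hd0]
      have hx : |ξ| / a ≤ 1 := (div_le_one ha0).2 hξa
      have h0 : 0 ≤ |ξ| / a := div_nonneg (abs_nonneg ξ) ha0.le
      nlinarith [mul_nonneg (sub_nonneg.2 hx) hd0.le,
        mul_nonneg (mul_nonneg (sub_nonneg.2 hκ1) h0) hd0.le]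
    have h2 : |κ * a * (ξ / (2 * a * b))| ≤ d := by
      rw [abs_mul, abs_mul, abs_div, abs_of_pos hκ0, abs_of_pos ha0,
        abs_of_pos (by positivity : (0:ℝ) < 2 * a * b)]
      have e : κ * a * (|ξ| / (2 * a * b)) = κ * |ξ| / (2 * b) := by
        field_simp
      rw [e, div_le_iff₀ (by positivity : (0:ℝ) < 2 * b)]
      nlinarith [mul_nonneg (sub_nonneg.2 hκ1) (abs_nonneg ξ),
        mul_nonneg hb0.le (sub_nonneg.2 hbd), mul_nonneg hb0.le hd0.le]
    calc |κ * (ξ / a) * d - κ * a * (ξ / (2 * a * b))|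
        ≤ |κ * (ξ / a) * d| + |κ * a * (ξ / (2 * a * b))| := abs_sub _ _
      _ ≤ d + d := add_le_add h1 h2
      _ ≤ 2 * d ^ 2 := by nlinarith
  · -- t-derivative identity
    have hg : HasDerivAt (fun s : ℝ => b + κ * s) κ t := by
      simpa using ((hasDerivAt_id t).const_mul κ).const_add b
    have hL : HasDerivAt (fun s : ℝ => Lkappa κ s ξ)
        ((0 * (b + κ * t) - κ * a * κ) / (b + κ * t) ^ 2) t := by
      exact ((hasDerivAt_const t (κ * a)).div hg hd0.ne').const_add 1
    rw [hL.deriv, hLval]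
    have hda : (0:ℝ) < d + κ * a := by positivity
    rw [show Real.sqrt (Real.sqrt (1 + ξ ^ 2)) + κ * t = d from rfl]
    field_simp
    ring
  · -- inequality
    have hg : HasDerivAt (fun s : ℝ => b + κ * s) κ t := by
      simpa using ((hasDerivAt_id t).const_mul κ).const_add b
    have hL : HasDerivAt (fun s : ℝ => Lkappa κ s ξ)
        ((0 * (b + κ * t) - κ * a * κ) / (b + κ * t) ^ 2) t := by
      exact ((hasDerivAt_const t (κ * a)).div hg hd0.ne').const_add 1
    rw [hL.deriv, hLval]
    have hrpow : a ^ ((3:ℝ)/2) = b ^ 3 := by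
      rw [show (3:ℝ)/2 = (1/2 : ℝ) * (3:ℕ) by norm_num, Real.rpow_mul ha0.le,
        Real.rpow_natCast, ← Real.sqrt_eq_rpow]
    rw [hrpow]
    have hlhs : (0 * (b + κ * t) - κ * a * κ) / (b + κ * t) ^ 2 = -(κ ^ 2 * a / d ^ 2) := by
      rw [show b + κ * t = d from rfl]; field_simp; ring
    rw [hlhs]
    have hLpos : (0:ℝ) < 1 + κ * a / d := by positivity
    have hden2 : (0:ℝ) < b ^ 3 + κ * t ^ 2 := by positivity
    rw [neg_neg, div_div]
    rw [div_le_div_iff₀ (by positivity) hden2]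
    have hexp : d ^ 2 * (1 + κ * a / d) = d * (d + κ * a) := by
      field_simp
    rw [hexp]
    have hdiff : κ * a * (d * (d + κ * a)) - κ ^ 2 * a * (b ^ 3 + κ * t ^ 2) =
        κ * b ^ 2 * (b ^ 2 + 2 * b * κ * t + κ ^ 2 * b ^ 2 * t) := by
      simp only [hd_def, ← hb2]; ring
    have h1 : (0:ℝ) ≤ κ * b ^ 2 * (b ^ 2 + 2 * b * κ * t + κ ^ 2 * b ^ 2 * t) := by
      apply mul_nonneg (by positivity)
      have e1 : (0:ℝ) ≤ b * κ * t := mul_nonneg (mul_nonneg hb0.le hκ0.le) ht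
      have e2 : (0:ℝ) ≤ κ ^ 2 * b ^ 2 * t :=
        mul_nonneg (mul_nonneg (sq_nonneg κ) (sq_nonneg b)) ht
      have e3 : (0:ℝ) ≤ b ^ 2 := sq_nonneg b
      linarith
    linarith [hdiff, h1]
end
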